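/- Let A ∈ ℝ^{n×n}, C ∈ ℝ^{q×n}, and t₁ > 0. Then the kernel of the observability Gramian W(t₁) equals the kernel of the observability matrix O of (C, A); equivalently, W(t₁)x = 0 if and only if C·Aᵏ·x = 0 for all k = 0, 1, …, n−1, if and only if C·exp(tA)·x = 0 for all t ∈ [0, t₁]. -/

import Mathlib

open Matrix intervalIntegral

/-- Observability matrix of the pair `(C, A)`: the vertical block stack of
`C, C*A, C*A², …, C*A^(n-1)`, indexed so that entry `((k, i), j)` is `(C * A^k) i j`. -/
noncomputable def obsMat {n q : ℕ} (C : Matrix (Fin q) (Fin n) ℝ)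
    (A : Matrix (Fin n) (Fin n) ℝ) : Matrix (Fin n × Fin q) (Fin n) ℝ :=
  fun ki j => (C * A ^ (ki.1 : ℕ)) ki.2 j

/-- Observability Gramian `W(t₁) = ∫₀^{t₁} exp(Aᵀτ) Cᵀ C exp(Aτ) dτ` (entrywise integral). -/
noncomputable def obsGram {n q : ℕ} (A : Matrix (Fin n) (Fin n) ℝ)
    (C : Matrix (Fin q) (Fin n) ℝ) (t₁ : ℝ) : Matrix (Fin n) (Fin n) ℝ :=
  fun i j => ∫ τ in (0:ℝ)..t₁,
    (NormedSpace.exp (τ • Aᵀ) * Cᵀ * C * NormedSpace.exp (τ • A)) i j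

namespace ObsKernelAux
section
attribute [local instance] Matrix.linftyOpNormedRing Matrix.linftyOpNormedAlgebra

variable {n q m : ℕ}

/-- `M ↦ M.mulVec x` as a continuous linear map. -/
noncomputable def mvCLM (x : Fin n → ℝ) :
    Matrix (Fin m) (Fin n) ℝ →L[ℝ] (Fin m → ℝ) :=
  LinearMap.toContinuousLinearMap
    { toFun := fun M => M.mulVec x
      map_add' := fun M N => Matrix.add_mulVec M N x
      map_smul' := fun c M => Matrix.smul_mulVec c M x }

@[simp] theorem mvCLM_apply (x : Fin n → ℝ) (M : Matrix (Fin m) (Fin n) ℝ) :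
    mvCLM x M = M.mulVec x := rfl

/-- `M ↦ B * M` as a continuous linear map. -/
noncomputable def lmulCLM (B : Matrix (Fin m) (Fin n) ℝ) :
    Matrix (Fin n) (Fin n) ℝ →L[ℝ] Matrix (Fin m) (Fin n) ℝ :=
  LinearMap.toContinuousLinearMap
    { toFun := fun M => B * M
      map_add' := fun M N => Matrix.mul_add B M N
      map_smul' := fun c M => Matrix.mul_smul B c M }

@[simp] theorem lmulCLM_apply (B : Matrix (Fin m) (Fin n) ℝ)
    (M : Matrix (Fin n) (Fin n) ℝ) : lmulCLM B M = B * M := rfl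

theorem hasDerivAt_mv (A : Matrix (Fin n) (Fin n) ℝ) (B : Matrix (Fin m) (Fin n) ℝ)
    (x : Fin n → ℝ) (t : ℝ) :
    HasDerivAt (fun s : ℝ => (B * NormedSpace.exp (s • A)).mulVec x)
      ((B * (A * NormedSpace.exp (t • A))).mulVec x) t := by
  have h1 : HasDerivAt (fun s : ℝ => NormedSpace.exp (s • A))
      (A * NormedSpace.exp (t • A)) t := hasDerivAt_exp_smul_const' A t
  have h2 := (((mvCLM x).comp (lmulCLM B)).hasFDerivAt).comp_hasDerivAt t h1
  exact h2

theorem continuous_mv (A : Matrix (Fin n) (Fin n) ℝ) (B : Matrix (Fin m) (Fin n) ℝ)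
    (x : Fin n → ℝ) :
    Continuous (fun s : ℝ => (B * NormedSpace.exp (s • A)).mulVec x) :=
  continuous_iff_continuousAt.2 fun t => (hasDerivAt_mv A B x t).continuousAt

/-- From vanishing of `C exp(tA) x` on `[0,t₁]`, all `C A^k x` vanish. -/
theorem all_pow_of_vanish (A : Matrix (Fin n) (Fin n) ℝ) (C : Matrix (Fin q) (Fin n) ℝ)
    (x : Fin n → ℝ) {t₁ : ℝ} (ht₁ : 0 < t₁)
    (h : ∀ t ∈ Set.Icc (0:ℝ) t₁, (C * NormedSpace.exp (t • A)).mulVec x = 0) :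
    ∀ k : ℕ, (C * A ^ k).mulVec x = 0 := by
  have key : ∀ k : ℕ, ∀ t ∈ Set.Icc (0:ℝ) t₁,
      (C * A ^ k * NormedSpace.exp (t • A)).mulVec x = 0 := by
    intro k
    induction k with
    | zero => simpa using h
    | succ k ih =>
      have hIoo : ∀ t ∈ Set.Ioo (0:ℝ) t₁,
          (C * A ^ (k+1) * NormedSpace.exp (t • A)).mulVec x = 0 := by
        intro t ht
        have hd := hasDerivAt_mv A (C * A ^ k) x t
        have hmem : Set.Ioo (0:ℝ) t₁ ∈ nhds t := isOpen_Ioo.mem_nhds ht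
        have heq : (fun s : ℝ => (C * A ^ k * NormedSpace.exp (s • A)).mulVec x)
            =ᶠ[nhds t] fun _ => (0 : Fin q → ℝ) := by
          filter_upwards [hmem] with s hs
          exact ih s (Set.Ioo_subset_Icc_self hs)
        have hd0 : HasDerivAt (fun _ : ℝ => (0 : Fin q → ℝ)) 0 t := hasDerivAt_const t 0
        have hd' := hd0.congr_of_eventuallyEq heq
        have := hd.unique hd'
        calc (C * A ^ (k+1) * NormedSpace.exp (t • A)).mulVec x
            = (C * A ^ k * (A * NormedSpace.exp (t • A))).mulVec x := by
              simp only [pow_succ, Matrix.mul_assoc, mul_assoc]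
          _ = 0 := this
      intro t ht
      have hcl : Set.Icc (0:ℝ) t₁ ⊆ closure (Set.Ioo (0:ℝ) t₁) := by
        rw [closure_Ioo ht₁.ne]
      have := Set.EqOn.closure (fun s hs => hIoo s hs)
        (continuous_mv A (C * A ^ (k+1)) x) continuous_const
      exact this (hcl ht)
  intro k
  have := key k 0 (Set.left_mem_Icc.2 ht₁.le)
  simpa using this

/-- Converse: if all `C A^k x = 0` then `C exp(tA) x = 0` for every `t`. -/
theorem vanish_of_all_pow (A : Matrix (Fin n) (Fin n) ℝ) (C : Matrix (Fin q) (Fin n) ℝ)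
    (x : Fin n → ℝ) (h : ∀ k : ℕ, (C * A ^ k).mulVec x = 0) (t : ℝ) :
    (C * NormedSpace.exp (t • A)).mulVec x = 0 := by
  have hsum : Summable fun k : ℕ => ((Nat.factorial k : ℝ)⁻¹) • (t • A) ^ k :=
    NormedSpace.expSeries_summable' (𝕂 := ℝ) (t • A)
  have hexp : NormedSpace.exp (t • A)
      = ∑' k : ℕ, ((Nat.factorial k : ℝ)⁻¹) • (t • A) ^ k :=
    congrFun (NormedSpace.exp_eq_tsum (𝕂 := ℝ)) (t • A)
  rw [show (C * NormedSpace.exp (t • A)).mulVec x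
      = ((mvCLM x).comp (lmulCLM C)) (NormedSpace.exp (t • A)) from rfl, hexp,
    ContinuousLinearMap.map_tsum _ hsum]
  have hz : ∀ k : ℕ, ((mvCLM x).comp (lmulCLM C)) (((Nat.factorial k : ℝ)⁻¹) • (t • A) ^ k)
      = 0 := by
    intro k
    rw [ContinuousLinearMap.map_smul]
    simp only [ContinuousLinearMap.comp_apply, lmulCLM_apply, mvCLM_apply]
    rw [smul_pow, Matrix.mul_smul, Matrix.smul_mulVec, h k]
    simp
  simp only [hz, tsum_zero]


/-- The Gramian integrand equals `Nᵀ N` for `N = C exp(τA)`. -/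
theorem integrand_eq (A : Matrix (Fin n) (Fin n) ℝ) (C : Matrix (Fin q) (Fin n) ℝ) (τ : ℝ) :
    NormedSpace.exp (τ • Aᵀ) * Cᵀ * C * NormedSpace.exp (τ • A) =
      (C * NormedSpace.exp (τ • A))ᵀ * (C * NormedSpace.exp (τ • A)) := by
  rw [show τ • Aᵀ = (τ • A)ᵀ by rw [Matrix.transpose_smul],
    Matrix.exp_transpose, Matrix.transpose_mul, Matrix.mul_assoc, Matrix.mul_assoc]

theorem quad (N : Matrix (Fin q) (Fin n) ℝ) (x : Fin n → ℝ) :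
    x ⬝ᵥ ((Nᵀ * N).mulVec x) = (N.mulVec x) ⬝ᵥ (N.mulVec x) := by
  rw [← Matrix.mulVec_mulVec, dotProduct_mulVec, Matrix.vecMul_transpose]

theorem continuous_g (A : Matrix (Fin n) (Fin n) ℝ) (C : Matrix (Fin q) (Fin n) ℝ) :
    Continuous (fun τ : ℝ =>
      NormedSpace.exp (τ • Aᵀ) * Cᵀ * C * NormedSpace.exp (τ • A)) := by
  have h1 : Continuous fun τ : ℝ => NormedSpace.exp (τ • Aᵀ) :=
    NormedSpace.exp_continuous.comp (continuous_id.smul continuous_const)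
  have h2 : Continuous fun τ : ℝ => NormedSpace.exp (τ • A) :=
    NormedSpace.exp_continuous.comp (continuous_id.smul continuous_const)
  exact ((h1.matrix_mul continuous_const).matrix_mul continuous_const).matrix_mul h2

/-- Each entry of `W(t₁) x` is the integral of the corresponding entry of the integrand
applied to `x`. -/
theorem gram_mulVec_eq (A : Matrix (Fin n) (Fin n) ℝ) (C : Matrix (Fin q) (Fin n) ℝ)
    (t₁ : ℝ) (x : Fin n → ℝ) (i : Fin n) :
    (obsGram A C t₁).mulVec x i = ∫ τ in (0:ℝ)..t₁,
      ((NormedSpace.exp (τ • Aᵀ) * Cᵀ * C * NormedSpace.exp (τ • A)).mulVec x) i := by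
  have hint : ∀ j : Fin n, IntervalIntegrable
      (fun τ => (NormedSpace.exp (τ • Aᵀ) * Cᵀ * C * NormedSpace.exp (τ • A)) i j * x j)
      MeasureTheory.volume 0 t₁ :=
    fun j => (((continuous_g A C).matrix_elem i j).mul continuous_const).intervalIntegrable 0 t₁
  simp only [Matrix.mulVec, dotProduct, obsGram]
  have h1 : ∀ j : Fin n, (∫ τ in (0:ℝ)..t₁,
      (NormedSpace.exp (τ • Aᵀ) * Cᵀ * C * NormedSpace.exp (τ • A)) i j) * x j
      = ∫ τ in (0:ℝ)..t₁,
        (NormedSpace.exp (τ • Aᵀ) * Cᵀ * C * NormedSpace.exp (τ • A)) i j * x j :=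
    fun j => (intervalIntegral.integral_mul_const _ _).symm
  rw [Finset.sum_congr rfl (fun j _ => h1 j),
    ← intervalIntegral.integral_finset_sum (fun j _ => hint j)]

theorem eqzero_of_integral_zero {f : ℝ → ℝ} (hf : Continuous f) (h0 : ∀ t, 0 ≤ f t)
    {t₁ : ℝ} (ht₁ : 0 < t₁) (hint : ∫ τ in (0:ℝ)..t₁, f τ = 0) :
    ∀ t ∈ Set.Icc (0:ℝ) t₁, f t = 0 := by
  have hae := (intervalIntegral.integral_eq_zero_iff_of_le_of_nonneg_ae ht₁.le
      (Filter.Eventually.of_forall fun t => h0 t)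
      (hf.intervalIntegrable _ _)).mp hint
  have hnull : MeasureTheory.volume ({t | f t ≠ 0} ∩ Set.Ioc 0 t₁) = 0 := by
    have := (MeasureTheory.ae_restrict_iff' measurableSet_Ioc).mp hae
    rw [MeasureTheory.ae_iff] at this
    refine le_antisymm (le_of_le_of_eq (MeasureTheory.measure_mono ?_) this) (zero_le)
    intro t ht
    exact fun h => ht.1 (h ht.2)
  have hopen : IsOpen ({t | f t ≠ 0} ∩ Set.Ioo 0 t₁) :=
    (isOpen_compl_iff.2 (isClosed_eq hf continuous_const)).inter isOpen_Ioo
  have hempty : {t | f t ≠ 0} ∩ Set.Ioo 0 t₁ = ∅ :=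
    hopen.eq_empty_of_measure_zero (MeasureTheory.measure_mono_null
      (Set.inter_subset_inter_right _ Set.Ioo_subset_Ioc_self) hnull)
  have hIoo : ∀ t ∈ Set.Ioo (0:ℝ) t₁, f t = 0 := by
    intro t ht
    by_contra hne
    have hmem : t ∈ ({t | f t ≠ 0} ∩ Set.Ioo 0 t₁) := ⟨hne, ht⟩
    rw [hempty] at hmem
    exact hmem
  intro t ht
  have hcl : Set.Icc (0:ℝ) t₁ ⊆ closure (Set.Ioo (0:ℝ) t₁) := by
    rw [closure_Ioo ht₁.ne]
  exact Set.EqOn.closure (fun s hs => hIoo s hs) hf continuous_const (hcl ht)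

/-- Cayley–Hamilton: vanishing for `k < n` gives vanishing for all `k`. -/
theorem all_of_lt (A : Matrix (Fin n) (Fin n) ℝ) (C : Matrix (Fin q) (Fin n) ℝ)
    (x : Fin n → ℝ) (h : ∀ k : ℕ, k < n → (C * A ^ k).mulVec x = 0) :
    ∀ k : ℕ, (C * A ^ k).mulVec x = 0 := by
  rcases Nat.eq_zero_or_pos n with hn | hn
  · subst hn
    intro k
    have hx : x = 0 := funext fun i => i.elim0
    simp [hx]
  intro k
  have hch := Matrix.pow_eq_aeval_mod_charpoly A k
  have hdeg : (Polynomial.X ^ k %ₘ A.charpoly).natDegree < n := by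
    have h1 : A.charpoly.Monic := A.charpoly_monic
    have h2 : A.charpoly ≠ 1 := by
      intro hq
      have h3 := A.charpoly_natDegree_eq_dim
      rw [hq] at h3
      simp [Fintype.card_fin] at h3
      omega
    have h4 := Polynomial.natDegree_modByMonic_lt (Polynomial.X ^ k) h1 h2
    have h5 := A.charpoly_natDegree_eq_dim
    rw [Fintype.card_fin] at h5
    omega
  rw [hch, Polynomial.aeval_eq_sum_range' hdeg, Matrix.mul_sum]
  have hterm : ∀ i ∈ Finset.range n,
      C * ((Polynomial.X ^ k %ₘ A.charpoly).coeff i • A ^ i)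
        = (Polynomial.X ^ k %ₘ A.charpoly).coeff i • (C * A ^ i) :=
    fun i _ => Matrix.mul_smul _ _ _
  rw [Finset.sum_congr rfl hterm]
  rw [show (∑ i ∈ Finset.range n,
      (Polynomial.X ^ k %ₘ A.charpoly).coeff i • (C * A ^ i)).mulVec x
      = mvCLM x (∑ i ∈ Finset.range n,
        (Polynomial.X ^ k %ₘ A.charpoly).coeff i • (C * A ^ i)) from rfl, map_sum]
  refine Finset.sum_eq_zero fun i hi => ?_
  rw [ContinuousLinearMap.map_smul, mvCLM_apply, h i (Finset.mem_range.mp hi)]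
  simp

end
end ObsKernelAux

open ObsKernelAux in
/-- The kernel of the observability Gramian `W(t₁)` (for `t₁ > 0`) equals the kernel of
the observability matrix `O`; equivalently, `W(t₁)x = 0` iff `C·Aᵏ·x = 0` for all
`k = 0, …, n−1`, iff `C·exp(tA)·x = 0` for all `t ∈ [0, t₁]`. -/
theorem gramian_kernel_eq_obs_kernel {n q : ℕ}
    (A : Matrix (Fin n) (Fin n) ℝ) (C : Matrix (Fin q) (Fin n) ℝ)
    (t₁ : ℝ) (ht₁ : 0 < t₁) :
    (∀ x : Fin n → ℝ, (obsGram A C t₁).mulVec x = 0 ↔ (obsMat C A).mulVec x = 0) ∧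
    (∀ x : Fin n → ℝ, (obsGram A C t₁).mulVec x = 0 ↔
      ∀ k : ℕ, k < n → (C * A ^ k).mulVec x = 0) ∧
    (∀ x : Fin n → ℝ, (obsGram A C t₁).mulVec x = 0 ↔
      ∀ t ∈ Set.Icc (0:ℝ) t₁, C.mulVec ((NormedSpace.exp (t • A)).mulVec x) = 0) := by

  -- Gramian kernel → vanishing of `C exp(tA) x` on `[0,t₁]`
  have hPG_P3 : ∀ x : Fin n → ℝ, (obsGram A C t₁).mulVec x = 0 →
      ∀ t ∈ Set.Icc (0:ℝ) t₁, (C * NormedSpace.exp (t • A)).mulVec x = 0 := by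
    intro x hW
    set y : ℝ → Fin q → ℝ := fun τ => (C * NormedSpace.exp (τ • A)).mulVec x with hy
    have hycont : Continuous y := continuous_mv A C x
    set f : ℝ → ℝ := fun τ => y τ ⬝ᵥ y τ with hf
    have hfcont : Continuous f := hycont.dotProduct hycont
    have hfnn : ∀ τ, 0 ≤ f τ := fun τ =>
      Finset.sum_nonneg fun i _ => mul_self_nonneg (y τ i)
    have hentcont : ∀ i : Fin n, Continuous fun τ : ℝ =>
        ((NormedSpace.exp (τ • Aᵀ) * Cᵀ * C * NormedSpace.exp (τ • A)).mulVec x) i :=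
      fun i => (continuous_apply i).comp ((continuous_g A C).matrix_mulVec continuous_const)
    have hint0 : ∫ τ in (0:ℝ)..t₁, f τ = 0 := by
      have hq : x ⬝ᵥ (obsGram A C t₁).mulVec x = ∫ τ in (0:ℝ)..t₁, f τ := by
        simp only [dotProduct]
        have h1 : ∀ i : Fin n, x i * (obsGram A C t₁).mulVec x i
            = ∫ τ in (0:ℝ)..t₁,
              x i * ((NormedSpace.exp (τ • Aᵀ) * Cᵀ * C
                * NormedSpace.exp (τ • A)).mulVec x) i := by
          intro i
          rw [gram_mulVec_eq, intervalIntegral.integral_const_mul]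
        rw [Finset.sum_congr rfl fun i _ => h1 i,
          ← intervalIntegral.integral_finset_sum (f := fun i τ => x i * ((NormedSpace.exp (τ • Aᵀ) * Cᵀ * C
              * NormedSpace.exp (τ • A)).mulVec x) i) (fun i _ =>
            (continuous_const.mul (hentcont i)).intervalIntegrable 0 t₁)]
        refine intervalIntegral.integral_congr fun τ _ => ?_
        have : (∑ i : Fin n, x i * ((NormedSpace.exp (τ • Aᵀ) * Cᵀ * C
            * NormedSpace.exp (τ • A)).mulVec x) i)
            = x ⬝ᵥ ((NormedSpace.exp (τ • Aᵀ) * Cᵀ * C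
              * NormedSpace.exp (τ • A)).mulVec x) := rfl
        rw [this, integrand_eq, quad]
      rw [hW, dotProduct_zero] at hq
      exact hq.symm
    intro t ht
    have hft := eqzero_of_integral_zero hfcont hfnn ht₁ hint0 t ht
    exact (dotProduct_self_eq_zero).mp hft
  -- converse: vanishing on `[0,t₁]` → Gramian kernel
  have hP3_PG : ∀ x : Fin n → ℝ,
      (∀ t ∈ Set.Icc (0:ℝ) t₁, (C * NormedSpace.exp (t • A)).mulVec x = 0) →
      (obsGram A C t₁).mulVec x = 0 := by
    intro x h
    funext i
    rw [gram_mulVec_eq]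
    have hEq : Set.EqOn (fun τ : ℝ =>
        ((NormedSpace.exp (τ • Aᵀ) * Cᵀ * C * NormedSpace.exp (τ • A)).mulVec x) i)
        (fun _ => (0:ℝ)) (Set.uIcc 0 t₁) := by
      intro τ hτ
      rw [Set.uIcc_of_le ht₁.le] at hτ
      have : (NormedSpace.exp (τ • Aᵀ) * Cᵀ * C
          * NormedSpace.exp (τ • A)).mulVec x = 0 := by
        rw [integrand_eq, ← Matrix.mulVec_mulVec, h τ hτ, Matrix.mulVec_zero]
      simp [this]
    rw [intervalIntegral.integral_congr hEq]
    simp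
  -- `P3 ↔ all powers ↔ powers below n`
  have hP3_iff : ∀ x : Fin n → ℝ,
      (∀ t ∈ Set.Icc (0:ℝ) t₁, (C * NormedSpace.exp (t • A)).mulVec x = 0) ↔
      (∀ k : ℕ, k < n → (C * A ^ k).mulVec x = 0) := by
    intro x
    constructor
    · intro h k _
      exact all_pow_of_vanish A C x ht₁ h k
    · intro h t _
      exact vanish_of_all_pow A C x (all_of_lt A C x h) t
  have hPG_iff_P2 : ∀ x : Fin n → ℝ, (obsGram A C t₁).mulVec x = 0 ↔
      ∀ k : ℕ, k < n → (C * A ^ k).mulVec x = 0 := by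
    intro x
    constructor
    · intro h
      exact (hP3_iff x).mp (hPG_P3 x h)
    · intro h
      exact hP3_PG x ((hP3_iff x).mpr h)
  have hobs : ∀ x : Fin n → ℝ, (obsMat C A).mulVec x = 0 ↔
      ∀ k : ℕ, k < n → (C * A ^ k).mulVec x = 0 := by
    intro x
    constructor
    · intro h k hk
      funext i
      have := congrFun h (⟨k, hk⟩, i)
      simpa [obsMat, Matrix.mulVec, dotProduct] using this
    · intro h
      funext ki
      have := congrFun (h ki.1 ki.1.isLt) ki.2
      simpa [obsMat, Matrix.mulVec, dotProduct] using this
  refine ⟨fun x => (hPG_iff_P2 x).trans (hobs x).symm, hPG_iff_P2, fun x => ?_⟩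
  constructor
  · intro h t ht
    rw [Matrix.mulVec_mulVec]
    exact hPG_P3 x h t ht
  · intro h
    refine hP3_PG x fun t ht => ?_
    rw [← Matrix.mulVec_mulVec]
    exact h t ht
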